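/- For all integers a, c with a ≥ 0, we have ∑_{ℓ=0}^{a} (-1)^ℓ·C(a,ℓ)·C(2ℓ,c) = (-1)^a·C(a,c-a)·2^{2a-c}, where in the case c > 2a both sides are zero (interpreting 2^{2a-c} times the vanishing binomial coefficient as zero). -/
import Mathlib


/-- Generalized binomial coefficient `C(z,n)` for integer `z`:
`z(z-1)⋯(z-n+1)/n!` for `n ≥ 0` and `0` for `n < 0`. -/
noncomputable def gbinom (z n : ℤ) : ℚ :=
  if 0 ≤ n then (∏ i ∈ Finset.range n.toNat, ((z : ℚ) - (i : ℚ))) / (Nat.factorial n.toNat : ℚ)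
  else 0

lemma gbinom_neg (z n : ℤ) (h : n < 0) : gbinom z n = 0 := if_neg (not_le.2 h)

lemma gbinom_natCast (n k : ℕ) : gbinom (n : ℤ) (k : ℤ) = (n.choose k : ℚ) := by
  unfold gbinom
  rw [if_pos (Int.natCast_nonneg k), Int.toNat_natCast]
  push_cast
  by_cases h : k ≤ n
  · have hprod : ∏ i ∈ Finset.range k, ((n : ℚ) - (i : ℚ)) = (n.descFactorial k : ℚ) := by
      rw [Nat.descFactorial_eq_prod_range, Nat.cast_prod]
      refine Finset.prod_congr rfl fun i hi => ?_
      rw [Nat.cast_sub (le_trans (le_of_lt (Finset.mem_range.mp hi)) h)]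
    rw [hprod, Nat.choose_eq_descFactorial_div_factorial,
      Nat.cast_div (Nat.factorial_dvd_descFactorial n k)
        (by exact_mod_cast (Nat.factorial_ne_zero k))]
  · push_neg at h
    rw [Nat.choose_eq_zero_of_lt h, Nat.cast_zero]
    rw [Finset.prod_eq_zero (Finset.mem_range.mpr h) (by simp), zero_div]

open Polynomial in
lemma key_nat (a cn : ℕ) :
    ∑ ℓ ∈ Finset.range (a + 1), (-1 : ℚ) ^ ℓ * (a.choose ℓ : ℚ) * ((2 * ℓ).choose cn : ℚ)
      = if a ≤ cn then (-1 : ℚ) ^ a * (a.choose (cn - a) : ℚ) * 2 ^ (2 * a - cn) else 0 := by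
  have hpoly : ∑ ℓ ∈ Finset.range (a + 1),
      C ((-1 : ℚ) ^ ℓ * (a.choose ℓ : ℚ)) * (X + C 1) ^ (2 * ℓ)
      = C ((-1 : ℚ) ^ a) * ((X + C 2) ^ a * X ^ a) := by
    have h1 : (-(X + C 1) ^ 2 + 1 : ℚ[X]) = C (-1) * ((X + C 2) * X) := by
      simp only [map_neg, map_one, map_ofNat]; ring
    have h2 : ((-(X + C 1) ^ 2 + 1 : ℚ[X])) ^ a = C ((-1 : ℚ) ^ a) * ((X + C 2) ^ a * X ^ a) := by
      rw [h1, mul_pow, mul_pow, ← map_pow]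
    rw [← h2, add_pow]
    refine Finset.sum_congr rfl fun ℓ hℓ => ?_
    rw [neg_pow ((X + C 1) ^ 2) ℓ, one_pow, mul_one, pow_mul]
    simp only [map_mul, map_pow, map_neg, map_one, Polynomial.C_eq_natCast]
    ring
  have hc := congrArg (fun p => Polynomial.coeff p cn) hpoly
  simp only [finset_sum_coeff, coeff_C_mul, coeff_X_add_C_pow, one_pow, one_mul, mul_one,
    coeff_mul_X_pow'] at hc
  rw [hc]
  split_ifs with h
  · rw [show a - (cn - a) = 2 * a - cn from by omega]
    ring
  · rw [mul_zero]

theorem alternating_sum_gbinom_double (a c : ℤ) (ha : 0 ≤ a) :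
    ∑ ℓ ∈ Finset.Icc (0 : ℤ) a, (-1 : ℚ) ^ ℓ * gbinom a ℓ * gbinom (2 * ℓ) c
      = (-1 : ℚ) ^ a * gbinom a (c - a) * (2 : ℚ) ^ (2 * a - c) := by
  obtain ⟨A, rfl⟩ := Int.eq_ofNat_of_zero_le ha
  have hmap : Finset.Icc (0 : ℤ) (A : ℤ)
      = Finset.map ⟨((↑·) : ℕ → ℤ), Nat.cast_injective⟩ (Finset.range (A + 1)) := by
    ext x
    simp only [Finset.mem_Icc, Finset.mem_map, Finset.mem_range, Function.Embedding.coeFn_mk]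
    constructor
    · rintro ⟨h0, h1⟩
      exact ⟨x.toNat, by omega, by omega⟩
    · rintro ⟨y, hy, rfl⟩
      exact ⟨Int.natCast_nonneg y, by omega⟩
  rw [hmap, Finset.sum_map]
  simp only [Function.Embedding.coeFn_mk]
  by_cases hc : c < 0
  · have hL : ∀ ℓ ∈ Finset.range (A + 1),
        (-1 : ℚ) ^ (ℓ : ℤ) * gbinom (A : ℤ) (ℓ : ℤ) * gbinom (2 * (ℓ : ℤ)) c = 0 := by
      intro ℓ _
      rw [gbinom_neg _ _ hc, mul_zero]
    rw [Finset.sum_congr rfl hL, Finset.sum_const, smul_zero,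
      gbinom_neg _ _ (by omega), mul_zero, zero_mul]
  · push_neg at hc
    obtain ⟨Cn, rfl⟩ := Int.eq_ofNat_of_zero_le hc
    have hterm : ∀ ℓ ∈ Finset.range (A + 1),
        (-1 : ℚ) ^ (ℓ : ℤ) * gbinom (A : ℤ) (ℓ : ℤ) * gbinom (2 * (ℓ : ℤ)) (Cn : ℤ)
          = (-1 : ℚ) ^ ℓ * (A.choose ℓ : ℚ) * ((2 * ℓ).choose Cn : ℚ) := by
      intro ℓ _
      rw [zpow_natCast, gbinom_natCast, show (2 * (ℓ : ℤ)) = ((2 * ℓ : ℕ) : ℤ) by push_cast; ring,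
        gbinom_natCast]
    rw [Finset.sum_congr rfl hterm, key_nat]
    by_cases h : A ≤ Cn
    · rw [if_pos h]
      have h1 : ((Cn : ℤ) - (A : ℤ)) = ((Cn - A : ℕ) : ℤ) := by omega
      rw [h1, gbinom_natCast, zpow_natCast]
      by_cases h2 : Cn ≤ 2 * A
      · have h3 : (2 * (A : ℤ) - (Cn : ℤ)) = ((2 * A - Cn : ℕ) : ℤ) := by omega
        rw [h3, zpow_natCast]
      · push_neg at h2
        rw [Nat.choose_eq_zero_of_lt (by omega), Nat.cast_zero]
        ring
    · rw [if_neg h, gbinom_neg _ _ (by omega), mul_zero, zero_mul]
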